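/- The tensors t_G, as G ranges over all n-wave graphs on m vertices, are linearly independent in V^⊗m. -/

import Mathlib

open scoped TensorProduct

/-- Diagonal action of a matrix on the `m`-fold tensor power of `Fin n → f`. -/
noncomputable def tensorAct (f : Type*) [Field f] (n m : ℕ) (a : Matrix (Fin n) (Fin n) f) :
    (⨂[f] _ : Fin m, (Fin n → f)) →ₗ[f] ⨂[f] _ : Fin m, (Fin n → f) :=
  PiTensorProduct.map (fun _ => a.mulVecLin)


/-- An `n`-wave graph on `k * n` vertices, encoded as a bijection sending each vertex to
(its component, its position in the component): positions within a component are
increasingly ordered, components are labeled by the order of their first vertices,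
and on every page `N` (carrying the `N`-th edge of every component) no two edges cross. -/
def IsWaveStruct {k n : ℕ} (hn : 0 < n) (e : Fin (k * n) ≃ Fin k × Fin n) : Prop :=
  (∀ j : Fin k, StrictMono fun i : Fin n => e.symm (j, i)) ∧
  (StrictMono fun j : Fin k => e.symm (j, ⟨0, hn⟩)) ∧
  (∀ (j j' : Fin k) (N : ℕ) (h : N + 1 < n),
    ¬(e.symm (j, ⟨N, Nat.lt_of_succ_lt h⟩) < e.symm (j', ⟨N, Nat.lt_of_succ_lt h⟩) ∧
      e.symm (j', ⟨N, Nat.lt_of_succ_lt h⟩) < e.symm (j, ⟨N + 1, h⟩) ∧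
      e.symm (j, ⟨N + 1, h⟩) < e.symm (j', ⟨N + 1, h⟩)))

/-- The tensor `t_G = Σ_{g ∈ O(G)} (-1)^{inv g} b_g` attached to a wave graph (or to any
partition of the `k * n` tensor positions into `k` ordered blocks of size `n`): the sum
over all orientations of each block of the signed standard monomials, i.e. the image of
`(x₁ ∧ ⋯ ∧ xₙ)^{⊗ k}` under the permutation of tensor factors determined by `e`. -/
noncomputable def waveTensor (f : Type*) [Field f] {k n : ℕ}
    (e : Fin (k * n) ≃ Fin k × Fin n) : ⨂[f] _ : Fin (k * n), (Fin n → f) :=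
  ∑ c : Fin k → Equiv.Perm (Fin n),
    (∏ j : Fin k, (Equiv.Perm.sign (c j) : ℤ)) •
      ⨂ₜ[f] v, Pi.single ((c (e v).1) ((e v).2)) (1 : f)

namespace WaveAux

variable (f : Type*) [Field f] {k n : ℕ}

/-- Coefficient-extraction functional for the standard monomial indexed by `w`. -/
noncomputable def coeffMap (w : Fin (k * n) → Fin n) :
    (⨂[f] _ : Fin (k * n), (Fin n → f)) →ₗ[f] f :=
  PiTensorProduct.lift ((MultilinearMap.mkPiAlgebra f (Fin (k * n)) f).compLinearMap
    fun v => LinearMap.proj (w v))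

lemma coeffMap_tprod (w u : Fin (k * n) → Fin n) :
    coeffMap f w (⨂ₜ[f] v, Pi.single (u v) (1 : f)) =
      if ∀ v, w v = u v then 1 else 0 := by
  classical
  rw [coeffMap, PiTensorProduct.lift.tprod]
  simp only [MultilinearMap.compLinearMap_apply, MultilinearMap.mkPiAlgebra_apply,
    LinearMap.proj_apply, Pi.single_apply]
  rw [Finset.prod_boole]
  simp

lemma coeffMap_waveTensor (e : Fin (k * n) ≃ Fin k × Fin n) (w : Fin (k * n) → Fin n) :
    coeffMap f w (waveTensor f e) =
      ∑ c : Fin k → Equiv.Perm (Fin n),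
        (∏ j : Fin k, (Equiv.Perm.sign (c j) : ℤ)) •
          (if ∀ v, w v = c (e v).1 (e v).2 then (1 : f) else 0) := by
  classical
  rw [waveTensor, map_sum]
  refine Finset.sum_congr rfl fun c _ => ?_
  rw [map_zsmul, coeffMap_tprod]

/-- The leading (lex-minimal) monomial of `waveTensor e`. -/
def lead (e : Fin (k * n) ≃ Fin k × Fin n) : Fin (k * n) → Fin n := fun v => (e v).2

lemma coeffMap_lead_self (e : Fin (k * n) ≃ Fin k × Fin n) :
    coeffMap f (lead e) (waveTensor f e) = 1 := by
  classical
  rw [coeffMap_waveTensor]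
  rw [Fintype.sum_eq_single (fun _ => (1 : Equiv.Perm (Fin n)))]
  · simp [lead]
  · intro c hc
    have : ¬ ∀ v, lead e v = c (e v).1 (e v).2 := by
      intro hall
      apply hc
      funext j
      refine Equiv.ext fun i => ?_
      have := hall (e.symm (j, i))
      simp only [lead, Equiv.apply_symm_apply] at this
      simpa using this.symm
    rw [if_neg this, smul_zero]

lemma coeffMap_waveTensor_ne_zero (e : Fin (k * n) ≃ Fin k × Fin n)
    (w : Fin (k * n) → Fin n) (h : coeffMap f w (waveTensor f e) ≠ 0) :
    ∃ c : Fin k → Equiv.Perm (Fin n), ∀ v, w v = c (e v).1 (e v).2 := by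
  classical
  by_contra hc
  push_neg at hc
  apply h
  rw [coeffMap_waveTensor]
  refine Finset.sum_eq_zero fun c _ => ?_
  obtain ⟨v, hv⟩ := hc c
  rw [if_neg (by intro hall; exact hv (hall v)), smul_zero]

/-- Lemma A: every monomial occurring in `waveTensor e` is lex-≥ `lead e`. -/
lemma lead_le (e : Fin (k * n) ≃ Fin k × Fin n)
    (h1 : ∀ j : Fin k, StrictMono fun i : Fin n => e.symm (j, i))
    (c : Fin k → Equiv.Perm (Fin n)) :
    toLex (lead e) ≤ toLex (fun v => c (e v).1 (e v).2) := by
  classical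
  set w : Fin (k * n) → Fin n := fun v => c (e v).1 (e v).2 with hw
  rcases eq_or_ne (lead e) w with h | h
  · exact le_of_eq (congrArg toLex h)
  · refine le_of_lt ?_
    obtain ⟨v, hv, hmin⟩ := (IsWellFounded.wf (α := Fin (k * n)) (r := (· < ·))).has_min
      {v | lead e v ≠ w v} (Function.ne_iff.1 h)
    have heq : ∀ u, u < v → lead e u = w u := by
      intro u hu
      by_contra hne
      exact hmin u hne hu
    -- below position `(e v).2` in component `(e v).1`, the permutation is the identity
    have hid : ∀ i : Fin n, i < (e v).2 → c (e v).1 i = i := by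
      intro i hi
      have hlt : e.symm ((e v).1, i) < v := by
        have := (h1 (e v).1) hi
        simpa [Prod.mk.eta] using this
      have := heq _ hlt
      simp only [lead, hw, Equiv.apply_symm_apply] at this
      exact this.symm
    have hvlt : lead e v < w v := by
      have hne : (e v).2 ≠ c (e v).1 (e v).2 := hv
      rcases lt_or_ge (c (e v).1 (e v).2) ((e v).2) with hlt | hge
      · exfalso
        have h2 := hid _ hlt
        exact hne ((c (e v).1).injective h2).symm
      · exact lt_of_le_of_ne hge hne
    exact ⟨v, fun u hu => heq u hu, hvlt⟩

/-- Lemma B: a wave structure is determined by its leading monomial. -/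
lemma lead_injective (hn : 0 < n) (e e' : Fin (k * n) ≃ Fin k × Fin n)
    (he : IsWaveStruct hn e) (he' : IsWaveStruct hn e')
    (h : ∀ v, (e v).2 = (e' v).2) : e = e' := by
  obtain ⟨h1, h2, h3⟩ := he
  obtain ⟨h1', h2', h3'⟩ := he'
  have main : ∀ v : Fin (k * n), (∀ u : Fin (k * n), u < v → e u = e' u) → e v = e' v := by
    intro v IH
    -- transferring `symm` values below `v`
    have symm_eq : ∀ p : Fin k × Fin n, e.symm p < v → e'.symm p = e.symm p := by
      intro p hp
      have hp' : e' (e.symm p) = p := by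
        rw [← IH _ hp, Equiv.apply_symm_apply]
      exact e'.symm_apply_eq.2 hp'.symm
    have symm_eq' : ∀ p : Fin k × Fin n, e'.symm p < v → e.symm p = e'.symm p := by
      intro p hp
      have hp' : e (e'.symm p) = p := by
        rw [IH _ hp, Equiv.apply_symm_apply]
      exact e.symm_apply_eq.2 hp'.symm
    obtain ⟨i, hi⟩ : ∃ i, (e v).2 = i := ⟨_, rfl⟩
    have hi' : (e' v).2 = i := (h v).symm.trans hi
    have hv : e.symm ((e v).1, i) = v := by
      rw [← hi, Prod.mk.eta, Equiv.symm_apply_apply]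
    have hv' : e'.symm ((e' v).1, i) = v := by
      rw [← hi', Prod.mk.eta, Equiv.symm_apply_apply]
    suffices hj : (e v).1 = (e' v).1 by
      have : (e v) = (e' v) := Prod.ext hj (h v)
      exact this
    by_contra hjj
    obtain ⟨iv, hlt⟩ := i
    cases iv with
    | zero =>
      have hi0 : (⟨0, hlt⟩ : Fin n) = ⟨0, hn⟩ := rfl
      rw [hi0] at hv hv'
      rcases lt_trichotomy ((e v).1) ((e' v).1) with hc | hc | hc
      · have hlt2 : e'.symm ((e v).1, ⟨0, hn⟩) < v := by
          have h4 := h2' hc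
          simp only at h4
          rwa [hv'] at h4
        have h5 : e'.symm ((e v).1, ⟨0, hn⟩) = v := ((symm_eq' _ hlt2).symm).trans hv
        rw [h5] at hlt2
        exact lt_irrefl v hlt2
      · exact hjj hc
      · have hlt2 : e.symm ((e' v).1, ⟨0, hn⟩) < v := by
          have h4 := h2 hc
          simp only at h4
          rwa [hv] at h4
        have h5 : e.symm ((e' v).1, ⟨0, hn⟩) = v := ((symm_eq _ hlt2).symm).trans hv'
        rw [h5] at hlt2
        exact lt_irrefl v hlt2
    | succ N =>
      have hv2 : e.symm ((e v).1, (⟨N + 1, hlt⟩ : Fin n)) = v := hv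
      have hv'2 : e'.symm ((e' v).1, (⟨N + 1, hlt⟩ : Fin n)) = v := hv'
      have hiNlt : (⟨N, Nat.lt_of_succ_lt hlt⟩ : Fin n) < (⟨N + 1, hlt⟩ : Fin n) := by
        simp [Fin.lt_def]
      -- a_j < v and a'_{j'} < v
      have haj : e.symm ((e v).1, (⟨N, Nat.lt_of_succ_lt hlt⟩ : Fin n)) < v := by
        have h4 := (h1 (e v).1) hiNlt
        simp only at h4
        rwa [hv2] at h4
      have haj' : e'.symm ((e' v).1, (⟨N, Nat.lt_of_succ_lt hlt⟩ : Fin n)) < v := by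
        have h4 := (h1' (e' v).1) hiNlt
        simp only at h4
        rwa [hv'2] at h4
      -- transfer
      have t1 : e'.symm ((e v).1, (⟨N, Nat.lt_of_succ_lt hlt⟩ : Fin n)) = e.symm ((e v).1, (⟨N, Nat.lt_of_succ_lt hlt⟩ : Fin n)) := symm_eq _ haj
      have t2 : e.symm ((e' v).1, (⟨N, Nat.lt_of_succ_lt hlt⟩ : Fin n)) = e'.symm ((e' v).1, (⟨N, Nat.lt_of_succ_lt hlt⟩ : Fin n)) := symm_eq' _ haj'
      -- v < e'.symm ((e v).1, N+1)
      have hvτ : v < e'.symm ((e v).1, ⟨N + 1, hlt⟩) := by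
        rcases lt_trichotomy (e'.symm ((e v).1, ⟨N + 1, hlt⟩)) v with hcc | hcc | hcc
        · exfalso
          have h5 : e.symm ((e v).1, (⟨N + 1, hlt⟩ : Fin n)) =
              e'.symm ((e v).1, ⟨N + 1, hlt⟩) := symm_eq' _ hcc
          rw [← h5, hv2] at hcc
          exact lt_irrefl v hcc
        · exfalso
          apply hjj
          have h5 : e'.symm (((e v).1, (⟨N + 1, hlt⟩ : Fin n))) =
              e'.symm (((e' v).1, (⟨N + 1, hlt⟩ : Fin n))) := hcc.trans hv'2.symm
          have h6 : (((e v).1, (⟨N + 1, hlt⟩ : Fin n))) = (((e' v).1, (⟨N + 1, hlt⟩ : Fin n))) :=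
            e'.symm.injective h5
          exact (Prod.ext_iff.mp h6).1
        · exact hcc
      -- v < e.symm ((e' v).1, N+1)
      have hvσ : v < e.symm ((e' v).1, ⟨N + 1, hlt⟩) := by
        rcases lt_trichotomy (e.symm ((e' v).1, ⟨N + 1, hlt⟩)) v with hcc | hcc | hcc
        · exfalso
          have h5 : e'.symm ((e' v).1, (⟨N + 1, hlt⟩ : Fin n)) =
              e.symm ((e' v).1, ⟨N + 1, hlt⟩) := symm_eq _ hcc
          rw [← h5, hv'2] at hcc
          exact lt_irrefl v hcc
        · exfalso
          apply hjj
          have h5 : e.symm (((e v).1, (⟨N + 1, hlt⟩ : Fin n))) =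
              e.symm (((e' v).1, (⟨N + 1, hlt⟩ : Fin n))) := hv2.trans hcc.symm
          have h6 : (((e v).1, (⟨N + 1, hlt⟩ : Fin n))) = (((e' v).1, (⟨N + 1, hlt⟩ : Fin n))) :=
            e.symm.injective h5
          exact (Prod.ext_iff.mp h6).1
        · exact hcc
      -- a_j ≠ a_{j'}
      have hane : e.symm ((e v).1, (⟨N, Nat.lt_of_succ_lt hlt⟩ : Fin n)) ≠ e.symm ((e' v).1, (⟨N, Nat.lt_of_succ_lt hlt⟩ : Fin n)) := by
        intro hh
        have h6 : (((e v).1, (⟨N, Nat.lt_of_succ_lt hlt⟩ : Fin n))) = (((e' v).1, (⟨N, Nat.lt_of_succ_lt hlt⟩ : Fin n))) := e.symm.injective hh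
        exact hjj (Prod.ext_iff.mp h6).1
      rcases lt_or_gt_of_ne hane with hcase | hcase
      · -- crossing for e
        refine h3 (e v).1 (e' v).1 N hlt ⟨?_, ?_, ?_⟩
        · exact hcase
        · rw [hv2, t2]; exact haj'
        · rw [hv2]; exact hvσ
      · -- crossing for e'
        refine h3' (e' v).1 (e v).1 N hlt ⟨?_, ?_, ?_⟩
        · rw [← t2, t1]; exact hcase
        · rw [hv'2, t1]; exact haj
        · rw [hv'2]; exact hvτ
  refine Equiv.ext fun v => ?_
  exact (IsWellFounded.wf (α := Fin (k * n)) (r := (· < ·))).induction v main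

end WaveAux

theorem waveTensors_linearIndependent (f : Type*) [Field f] [CharZero f] (k n : ℕ)
    (hn : 0 < n) :
    LinearIndependent f
      (fun G : {e : Fin (k * n) ≃ Fin k × Fin n // IsWaveStruct hn e} =>
        waveTensor f G.val) := by
  classical
  letI : LinearOrder (Lex (Fin (k * n) → Fin n)) :=
    @Pi.Lex.linearOrder (Fin (k * n)) _ _ Finite.to_wellFoundedLT _
  rw [linearIndependent_iff']
  intro s g hsum G hG
  by_contra hgG
  set t := s.filter (fun i => g i ≠ 0) with ht
  have htne : t.Nonempty := ⟨G, Finset.mem_filter.2 ⟨hG, hgG⟩⟩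
  obtain ⟨G₀, hG₀t, hmin⟩ :=
    Finset.exists_min_image t (fun i => toLex (WaveAux.lead i.val)) htne
  have hG₀s : G₀ ∈ s := (Finset.mem_filter.1 hG₀t).1
  have hgG₀ : g G₀ ≠ 0 := (Finset.mem_filter.1 hG₀t).2
  have h0 : WaveAux.coeffMap f (WaveAux.lead G₀.val) (∑ i ∈ s, g i • waveTensor f i.val) = 0 := by
    rw [hsum, map_zero]
  rw [map_sum] at h0
  have hterms : ∀ i ∈ s, i ≠ G₀ →
      WaveAux.coeffMap f (WaveAux.lead G₀.val) (g i • waveTensor f i.val) = 0 := by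
    intro i his hine
    rcases eq_or_ne (g i) 0 with hgi | hgi
    · rw [hgi, zero_smul, map_zero]
    · rw [map_smul]
      have hit : i ∈ t := Finset.mem_filter.2 ⟨his, hgi⟩
      have hcoeff : WaveAux.coeffMap f (WaveAux.lead G₀.val) (waveTensor f i.val) = 0 := by
        by_contra hne
        obtain ⟨c, hc⟩ := WaveAux.coeffMap_waveTensor_ne_zero f i.val _ hne
        have hle : toLex (WaveAux.lead i.val) ≤ toLex (WaveAux.lead G₀.val) := by
          have := WaveAux.lead_le i.val i.prop.1 c
          have hfun : (fun v => c (i.val v).1 (i.val v).2) = WaveAux.lead G₀.val := by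
            funext v
            exact (hc v).symm
          rwa [hfun] at this
        have hge : toLex (WaveAux.lead G₀.val) ≤ toLex (WaveAux.lead i.val) := hmin i hit
        have heq : WaveAux.lead G₀.val = WaveAux.lead i.val :=
          toLex.injective (le_antisymm hge hle)
        have : G₀.val = i.val := by
          refine WaveAux.lead_injective hn G₀.val i.val G₀.prop i.prop ?_
          intro v
          exact congrFun heq v
        exact hine (Subtype.ext this.symm)
      rw [hcoeff, smul_zero]
  rw [Finset.sum_eq_single G₀ hterms (fun h => absurd hG₀s h)] at h0
  rw [map_smul, WaveAux.coeffMap_lead_self, smul_eq_mul, mul_one] at h0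
  exact hgG₀ h0
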